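/- Differential identity for the Example 2 profile: Let n ≥ 1 and α, β, γ, κ > 0. Set u(t,x) = κ t^{−β} ℰ(t,x) with ℰ(t,x) = exp(−γ(1+|x|²)^{α/2}/t), and let a_{ij}(t,x) = (1+|x|²)^{(2−α)/2} δ_{ij}. Then for every t > 0 and x ∈ ℝⁿ: u_t − Σ_{i=1}^n ∂_{x_i}(a_{ii} ∂_{x_i}u) = (ακnγ − κβ)·t^{−β−1}·ℰ(t,x) + (κγ − α²κγ²·|x|²/(1+|x|²))·t^{−β−2}·(1+|x|²)^{α/2}·ℰ(t,x). -/

import Mathlib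

open MeasureTheory

noncomputable section

/-- The whole space `ℝ × ℝⁿ` (time × space). -/
abbrev Sp (n : ℕ) : Type := ℝ × EuclideanSpace ℝ (Fin n)

/-- Classical partial derivative in the time direction. -/
def pdt {n : ℕ} (f : Sp n → ℝ) (p : Sp n) : ℝ :=
  fderiv ℝ f p (1, 0)

/-- Classical partial derivative in the `i`-th space direction. -/
def pdx {n : ℕ} (i : Fin n) (f : Sp n → ℝ) (p : Sp n) : ℝ :=
  fderiv ℝ f p (0, EuclideanSpace.single i 1)

/-- The odd nonlinearity `s ↦ |s|^(q-1) s` (with the convention `|0|^(q-1)·0 = 0`). -/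
def nl (q s : ℝ) : ℝ := |s| ^ (q - 1) * s

/-- A test function: infinitely differentiable with compact support. -/
def IsTest {n : ℕ} (φ : Sp n → ℝ) : Prop :=
  ContDiff ℝ (⊤ : ℕ∞) φ ∧ HasCompactSupport φ

/-- `g` is the weak time-derivative of `u` on `ℝ × ℝⁿ`: `g` is locally integrable and
integration by parts against every test function holds. -/
def IsWeakDerivT {n : ℕ} (u g : Sp n → ℝ) : Prop :=
  LocallyIntegrable g volume ∧
  ∀ φ : Sp n → ℝ, IsTest φ → ∫ p, u p * pdt φ p = -∫ p, g p * φ p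

/-- `g` is the weak `x_i`-derivative of `u` on `ℝ × ℝⁿ`. -/
def IsWeakDerivX {n : ℕ} (i : Fin n) (u g : Sp n → ℝ) : Prop :=
  LocallyIntegrable g volume ∧
  ∀ φ : Sp n → ℝ, IsTest φ → ∫ p, u p * pdx i φ p = -∫ p, g p * φ p

/-- Standing assumptions on the coefficients `a_{ij}` and the dominating function `A`:
measurability, local boundedness, symmetry, and `0 ≤ Σ a_{ij} ξ_i ξ_j ≤ A |ξ|²` a.e. -/
structure Coeffs (n : ℕ) (a : Fin n → Fin n → Sp n → ℝ) (A : Sp n → ℝ) : Prop where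
  meas : ∀ i j, Measurable (a i j)
  locBdd : ∀ i j, ∀ K : Set (Sp n), IsCompact K → ∃ C : ℝ, ∀ p ∈ K, |a i j p| ≤ C
  symm : ∀ᵐ p : Sp n, ∀ i j, a i j p = a j i p
  measA : Measurable A
  nonnegA : ∀ p, 0 ≤ A p
  locBddA : ∀ K : Set (Sp n), IsCompact K → ∃ C : ℝ, ∀ p ∈ K, A p ≤ C
  quad : ∀ᵐ p : Sp n, ∀ ξ : Fin n → ℝ,
    0 ≤ ∑ i : Fin n, ∑ j : Fin n, a i j p * ξ i * ξ j ∧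
    ∑ i : Fin n, ∑ j : Fin n, a i j p * ξ i * ξ j ≤ A p * ∑ i : Fin n, ξ i ^ 2

/-- Condition (8): the essential supremum of `A` over the slab `{R/2 < |x| < R}`
is at most `c·R^(2-α)`, for every `R > 1`. -/
def Cond8 {n : ℕ} (A : Sp n → ℝ) (α c : ℝ) : Prop :=
  ∀ R : ℝ, 1 < R →
    ∀ᵐ p : Sp n, (R / 2 < ‖p.2‖ ∧ ‖p.2‖ < R) → A p ≤ c * R ^ (2 - α)

/-- `(u, v)` is a weak solution of
`u_t − Σ ∂_{x_i}(a_{ij} ∂_{x_j}u) − |u|^{q−1}u ≥ v_t − Σ ∂_{x_i}(a_{ij} ∂_{x_j}v) − |v|^{q−1}v`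
in the whole space `ℝ × ℝⁿ`. -/
def WeakSolPair {n : ℕ} (q : ℝ) (a : Fin n → Fin n → Sp n → ℝ) (u v : Sp n → ℝ) : Prop :=
  Measurable u ∧ Measurable v ∧
  LocallyIntegrable u volume ∧ LocallyIntegrable v volume ∧
  LocallyIntegrable (fun p => |u p| ^ q) volume ∧
  LocallyIntegrable (fun p => |v p| ^ q) volume ∧
  ∃ ut vt : Sp n → ℝ, ∃ ux vx : Fin n → Sp n → ℝ,
    IsWeakDerivT u ut ∧ IsWeakDerivT v vt ∧
    (∀ j, IsWeakDerivX j u (ux j)) ∧ (∀ j, IsWeakDerivX j v (vx j)) ∧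
    ∀ φ : Sp n → ℝ, IsTest φ → (∀ p, 0 ≤ φ p) →
      ∫ p, (vt p * φ p + ∑ i : Fin n, ∑ j : Fin n, a i j p * pdx i φ p * vx j p
              - nl q (v p) * φ p) ≤
      ∫ p, (ut p * φ p + ∑ i : Fin n, ∑ j : Fin n, a i j p * pdx i φ p * ux j p
              - nl q (u p) * φ p)

/-- `ℰ(t,x) = exp(−γ(1+|x|²)^{α/2}/t)`. -/
def profileE (n : ℕ) (α γ : ℝ) (p : Sp n) : ℝ :=
  Real.exp (-γ * (1 + ‖p.2‖ ^ 2) ^ (α / 2) / p.1)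

/-- `u(t,x) = κ t^{−β} ℰ(t,x)` (the Example 2 profile for `t > 0`). -/
def profileUPos (n : ℕ) (α β γ κ : ℝ) (p : Sp n) : ℝ :=
  κ * p.1 ^ (-β) * profileE n α γ p

/-- The diagonal coefficient `a_{ii}(t,x) = (1+|x|²)^{(2−α)/2}`. -/
def coefDiag (n : ℕ) (α : ℝ) (p : Sp n) : ℝ :=
  (1 + ‖p.2‖ ^ 2) ^ ((2 - α) / 2)

section AuxProfile

variable {n : ℕ}

lemma hw' (x : EuclideanSpace ℝ (Fin n)) : (0:ℝ) < 1 + ‖x‖ ^ 2 := by positivity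

lemma pdt_u (α β γ κ : ℝ) {q : Sp n} (ht : 0 < q.1) :
    pdt (profileUPos n α β γ κ) q =
      κ * (-β) * q.1 ^ (-β - 1) * profileE n α γ q +
        κ * q.1 ^ (-β) * (γ * (1 + ‖q.2‖ ^ 2) ^ (α / 2) / q.1 ^ 2) * profileE n α γ q := by
  have hW : HasFDerivAt (fun q : Sp n => 1 + ‖q.2‖ ^ 2) _ q := (hasFDerivAt_snd.norm_sq).const_add 1
  have hWp := hW.rpow_const (p := α / 2) (Or.inl (hw' q.2).ne')
  have hInv : HasFDerivAt (fun q : Sp n => (q.1)⁻¹)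
      ((-(q.1 ^ 2)⁻¹) • ContinuousLinearMap.fst ℝ ℝ (EuclideanSpace ℝ (Fin n))) q :=
    (hasDerivAt_inv ht.ne').comp_hasFDerivAt q hasFDerivAt_fst
  have hF := (hWp.const_mul (-γ)).mul hInv
  have hE := hF.exp
  have hT : HasFDerivAt (fun q : Sp n => q.1 ^ (-β))
      ((-β * q.1 ^ (-β - 1)) • ContinuousLinearMap.fst ℝ ℝ (EuclideanSpace ℝ (Fin n))) q :=
    (Real.hasDerivAt_rpow_const (p := -β) (Or.inl ht.ne')).comp_hasFDerivAt q hasFDerivAt_fst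
  have hu := (hT.const_mul κ).mul hE
  have hfun : profileUPos n α β γ κ =
      fun y : Sp n => κ * y.1 ^ (-β) * Real.exp (-γ * (1 + ‖y.2‖ ^ 2) ^ (α / 2) * y.1⁻¹) := by
    funext y; simp [profileUPos, profileE, div_eq_mul_inv]
  rw [pdt, hfun, (show HasFDerivAt (fun y : Sp n => κ * y.1 ^ (-β) *
      Real.exp (-γ * (1 + ‖y.2‖ ^ 2) ^ (α / 2) * y.1⁻¹)) _ q from hu).fderiv]
  simp only [ContinuousLinearMap.add_apply, ContinuousLinearMap.smul_apply,
    ContinuousLinearMap.coe_smul', Pi.smul_apply, ContinuousLinearMap.sub_apply,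
    ContinuousLinearMap.smulRight_apply, ContinuousLinearMap.coe_fst',
    ContinuousLinearMap.coe_snd', ContinuousLinearMap.comp_apply, innerSL_apply_apply,
    ContinuousLinearMap.coe_comp', Function.comp_apply, smul_eq_mul, inner_zero_right,
    Pi.mul_apply, profileE]
  rw [Real.rpow_sub ht, Real.rpow_one]
  field_simp
  ring

lemma pdx_u (α β γ κ : ℝ) (i : Fin n) {q : Sp n} (ht : 0 < q.1) :
    pdx i (profileUPos n α β γ κ) q =
      -(κ * γ * α) * q.1 ^ (-β - 1) * (1 + ‖q.2‖ ^ 2) ^ (α / 2 - 1) * q.2 i *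
        profileE n α γ q := by
  have hW : HasFDerivAt (fun q : Sp n => 1 + ‖q.2‖ ^ 2) _ q := (hasFDerivAt_snd.norm_sq).const_add 1
  have hWp := hW.rpow_const (p := α / 2) (Or.inl (hw' q.2).ne')
  have hInv : HasFDerivAt (fun q : Sp n => (q.1)⁻¹)
      ((-(q.1 ^ 2)⁻¹) • ContinuousLinearMap.fst ℝ ℝ (EuclideanSpace ℝ (Fin n))) q :=
    (hasDerivAt_inv ht.ne').comp_hasFDerivAt q hasFDerivAt_fst
  have hF := (hWp.const_mul (-γ)).mul hInv
  have hE := hF.exp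
  have hT : HasFDerivAt (fun q : Sp n => q.1 ^ (-β))
      ((-β * q.1 ^ (-β - 1)) • ContinuousLinearMap.fst ℝ ℝ (EuclideanSpace ℝ (Fin n))) q :=
    (Real.hasDerivAt_rpow_const (p := -β) (Or.inl ht.ne')).comp_hasFDerivAt q hasFDerivAt_fst
  have hu := (hT.const_mul κ).mul hE
  have hfun : profileUPos n α β γ κ =
      fun y : Sp n => κ * y.1 ^ (-β) * Real.exp (-γ * (1 + ‖y.2‖ ^ 2) ^ (α / 2) * y.1⁻¹) := by
    funext y; simp [profileUPos, profileE, div_eq_mul_inv]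
  rw [pdx, hfun, (show HasFDerivAt (fun y : Sp n => κ * y.1 ^ (-β) *
      Real.exp (-γ * (1 + ‖y.2‖ ^ 2) ^ (α / 2) * y.1⁻¹)) _ q from hu).fderiv]
  simp only [ContinuousLinearMap.add_apply, ContinuousLinearMap.smul_apply,
    ContinuousLinearMap.coe_smul', Pi.smul_apply, ContinuousLinearMap.sub_apply,
    ContinuousLinearMap.smulRight_apply, ContinuousLinearMap.coe_fst',
    ContinuousLinearMap.coe_snd', ContinuousLinearMap.comp_apply, innerSL_apply_apply,
    ContinuousLinearMap.coe_comp', Function.comp_apply, smul_eq_mul, inner_zero_right,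
    EuclideanSpace.inner_single_right, RCLike.inner_apply, starRingEnd_apply, star_trivial,
    Pi.mul_apply, profileE]
  rw [Real.rpow_sub ht, Real.rpow_one]
  field_simp
  ring

lemma coef_pdx (α β γ κ : ℝ) (i : Fin n) {q : Sp n} (ht : 0 < q.1) :
    (1 + ‖q.2‖ ^ 2) ^ ((2 - α) / 2) * pdx i (profileUPos n α β γ κ) q =
      -(κ * γ * α) * q.1 ^ (-β - 1) * (q.2 i * profileE n α γ q) := by
  rw [pdx_u α β γ κ i ht]
  have hw := hw' q.2
  rw [show (2 - α) / 2 = -(α / 2 - 1) by ring, Real.rpow_neg hw.le]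
  have h1 : (1 + ‖q.2‖ ^ 2) ^ (α / 2 - 1) ≠ 0 := (Real.rpow_pos_of_pos hw _).ne'
  field_simp

lemma pdx_h (α β γ κ : ℝ) (i : Fin n) {p : Sp n} (ht : 0 < p.1) :
    pdx i (fun q : Sp n => -(κ * γ * α) * q.1 ^ (-β - 1) * (q.2 i * profileE n α γ q)) p =
      -(κ * γ * α) * p.1 ^ (-β - 1) * profileE n α γ p +
        (p.2 i) ^ 2 *
          (κ * γ ^ 2 * α ^ 2 * p.1 ^ (-β - 2) * (1 + ‖p.2‖ ^ 2) ^ (α / 2 - 1) *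
            profileE n α γ p) := by
  have hW : HasFDerivAt (fun q : Sp n => 1 + ‖q.2‖ ^ 2) _ p := (hasFDerivAt_snd.norm_sq).const_add 1
  have hWp := hW.rpow_const (p := α / 2) (Or.inl (hw' p.2).ne')
  have hInv : HasFDerivAt (fun q : Sp n => (q.1)⁻¹)
      ((-(p.1 ^ 2)⁻¹) • ContinuousLinearMap.fst ℝ ℝ (EuclideanSpace ℝ (Fin n))) p :=
    (hasDerivAt_inv ht.ne').comp_hasFDerivAt p hasFDerivAt_fst
  have hF := (hWp.const_mul (-γ)).mul hInv
  have hE := hF.exp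
  have hT : HasFDerivAt (fun q : Sp n => q.1 ^ (-β - 1))
      (((-β - 1) * p.1 ^ (-β - 1 - 1)) • ContinuousLinearMap.fst ℝ ℝ (EuclideanSpace ℝ (Fin n))) p :=
    (Real.hasDerivAt_rpow_const (p := -β - 1) (Or.inl ht.ne')).comp_hasFDerivAt p hasFDerivAt_fst
  have hxi : HasFDerivAt (fun q : Sp n => q.2 i)
      ((EuclideanSpace.proj i).comp (ContinuousLinearMap.snd ℝ ℝ (EuclideanSpace ℝ (Fin n)))) p :=
    ((EuclideanSpace.proj i : EuclideanSpace ℝ (Fin n) →L[ℝ] ℝ).hasFDerivAt).comp p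
      hasFDerivAt_snd
  have hu := (hT.const_mul (-(κ * γ * α))).mul (hxi.mul hE)
  have hfun : (fun q : Sp n => -(κ * γ * α) * q.1 ^ (-β - 1) * (q.2 i * profileE n α γ q)) =
      fun y : Sp n => -(κ * γ * α) * y.1 ^ (-β - 1) *
        (y.2 i * Real.exp (-γ * (1 + ‖y.2‖ ^ 2) ^ (α / 2) * y.1⁻¹)) := by
    funext y; simp [profileE, div_eq_mul_inv]
  have hproj : (EuclideanSpace.proj i : EuclideanSpace ℝ (Fin n) →L[ℝ] ℝ)
      (EuclideanSpace.single i 1) = 1 := by simp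
  rw [pdx, hfun, (show HasFDerivAt (fun y : Sp n => -(κ * γ * α) * y.1 ^ (-β - 1) *
      (y.2 i * Real.exp (-γ * (1 + ‖y.2‖ ^ 2) ^ (α / 2) * y.1⁻¹))) _ p from hu).fderiv]
  simp only [ContinuousLinearMap.add_apply, ContinuousLinearMap.smul_apply,
    ContinuousLinearMap.coe_smul', Pi.smul_apply, ContinuousLinearMap.sub_apply,
    ContinuousLinearMap.smulRight_apply, ContinuousLinearMap.coe_fst',
    ContinuousLinearMap.coe_snd', ContinuousLinearMap.comp_apply, innerSL_apply_apply,
    ContinuousLinearMap.coe_comp', Function.comp_apply, smul_eq_mul, inner_zero_right,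
    EuclideanSpace.inner_single_right, RCLike.inner_apply, starRingEnd_apply, star_trivial,
    hproj, Pi.mul_apply, profileE]
  have e1 : p.1 ^ (-β - 1) = p.1 ^ (-β) / p.1 := by
    rw [Real.rpow_sub ht, Real.rpow_one]
  have e2 : p.1 ^ (-β - 1 - 1) = p.1 ^ (-β) / p.1 / p.1 := by
    rw [Real.rpow_sub ht, Real.rpow_one, e1]
  have e3 : p.1 ^ (-β - 2) = p.1 ^ (-β) / p.1 / p.1 := by
    rw [show (-β - 2 : ℝ) = -β - 1 - 1 by ring, e2]
  rw [e1, e2, e3]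
  field_simp
  ring

end AuxProfile

/-- **Differential identity for the Example 2 profile**: for `t > 0`,
`u_t − Σᵢ ∂_{x_i}(a_{ii} ∂_{x_i}u)
  = (ακnγ − κβ) t^{−β−1} ℰ + (κγ − α²κγ²|x|²/(1+|x|²)) t^{−β−2} (1+|x|²)^{α/2} ℰ`. -/
theorem profileU_differential_identity (n : ℕ) (hn : 1 ≤ n) (α β γ κ : ℝ)
    (hα : 0 < α) (hβ : 0 < β) (hγ : 0 < γ) (hκ : 0 < κ) :
    ∀ p : Sp n, 0 < p.1 →
      pdt (profileUPos n α β γ κ) p -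
        ∑ i : Fin n, pdx i (fun p' => coefDiag n α p' * pdx i (profileUPos n α β γ κ) p') p =
      (α * κ * n * γ - κ * β) * p.1 ^ (-β - 1) * profileE n α γ p +
      (κ * γ - α ^ 2 * κ * γ ^ 2 * (‖p.2‖ ^ 2 / (1 + ‖p.2‖ ^ 2))) *
        p.1 ^ (-β - 2) * (1 + ‖p.2‖ ^ 2) ^ (α / 2) * profileE n α γ p := by
  intro p ht
  have hw := hw' p.2
  have hterm : ∀ i : Fin n,
      pdx i (fun p' => coefDiag n α p' * pdx i (profileUPos n α β γ κ) p') p =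
        -(κ * γ * α) * p.1 ^ (-β - 1) * profileE n α γ p +
          (p.2 i) ^ 2 * (κ * γ ^ 2 * α ^ 2 * p.1 ^ (-β - 2) *
            (1 + ‖p.2‖ ^ 2) ^ (α / 2 - 1) * profileE n α γ p) := by
    intro i
    have hopen : IsOpen {q : Sp n | 0 < q.1} :=
      isOpen_lt continuous_const continuous_fst
    have hev : (fun q : Sp n => coefDiag n α q * pdx i (profileUPos n α β γ κ) q) =ᶠ[nhds p]
        (fun q : Sp n => -(κ * γ * α) * q.1 ^ (-β - 1) * (q.2 i * profileE n α γ q)) := by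
      filter_upwards [hopen.mem_nhds ht] with q hq
      simpa only [coefDiag] using coef_pdx α β γ κ i hq
    rw [pdx, hev.fderiv_eq, ← pdx, pdx_h α β γ κ i ht]
  have hsum : ∑ i : Fin n, (p.2 i) ^ 2 = ‖p.2‖ ^ 2 := by
    rw [EuclideanSpace.norm_eq, Real.sq_sqrt (by positivity)]
    simp [sq_abs]
  rw [pdt_u α β γ κ ht]
  simp only [hterm]
  rw [Finset.sum_add_distrib, Finset.sum_const, Finset.card_univ, Fintype.card_fin,
    ← Finset.sum_mul, hsum, nsmul_eq_mul]
  have e1 : p.1 ^ (-β - 1) = p.1 ^ (-β) / p.1 := by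
    rw [Real.rpow_sub ht, Real.rpow_one]
  have e3 : p.1 ^ (-β - 2) = p.1 ^ (-β) / p.1 / p.1 := by
    rw [show (-β - 2 : ℝ) = -β - 1 - 1 by ring, Real.rpow_sub ht, Real.rpow_one, e1]
  have e4 : (1 + ‖p.2‖ ^ 2) ^ (α / 2 - 1) = (1 + ‖p.2‖ ^ 2) ^ (α / 2) / (1 + ‖p.2‖ ^ 2) := by
    rw [Real.rpow_sub hw, Real.rpow_one]
  rw [e1, e3, e4]
  field_simp
  ring
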